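/- Let V be a finite-dimensional nonzero vector space over a field K and (A, A*) a Leonard pair on V (i.e., there is a basis in which A is irreducible tridiagonal and A* is diagonal, and a basis in which A* is irreducible tridiagonal and A is diagonal). Then A is multiplicity-free: A has dim(V) distinct eigenvalues, all lying in K. -/

import Mathlib

/-- A square matrix is irreducible tridiagonal: nonzero entries lie within
distance one of the diagonal, and all sub- and superdiagonal entries are nonzero. -/
def IsIrreducibleTridiagonal {K : Type*} [Field K] {n : ℕ}
    (M : Matrix (Fin n) (Fin n) K) : Prop :=
  (∀ i j : Fin n, ((i : ℕ) + 1 < j ∨ (j : ℕ) + 1 < i) → M i j = 0) ∧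
  (∀ i j : Fin n, ((i : ℕ) + 1 = j ∨ (j : ℕ) + 1 = i) → M i j ≠ 0)

/-- A Leonard pair: a pair of linear maps such that in some basis the first is
irreducible tridiagonal and the second diagonal, and in some basis the second is
irreducible tridiagonal and the first diagonal. -/
def IsLeonardPair {K V : Type*} [Field K] [AddCommGroup V] [Module K V]
    (A B : Module.End K V) : Prop :=
  ∃ (n : ℕ) (b c : Module.Basis (Fin n) K V),
    IsIrreducibleTridiagonal (LinearMap.toMatrix b b A) ∧
    (LinearMap.toMatrix b b B).IsDiag ∧
    IsIrreducibleTridiagonal (LinearMap.toMatrix c c B) ∧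
    (LinearMap.toMatrix c c A).IsDiag

/-- Key lemma: if A is irreducible tridiagonal in basis b, any eigenvector whose
first coordinate vanishes is zero. -/
lemma key_lemma {K V : Type*} [Field K] [AddCommGroup V] [Module K V]
    {n : ℕ} (hn : 0 < n) (b : Module.Basis (Fin n) K V) (A : Module.End K V)
    (hA : IsIrreducibleTridiagonal (LinearMap.toMatrix b b A)) (θ : K)
    (v : V) (hv : A v = θ • v) (h0 : b.repr v ⟨0, hn⟩ = 0) : v = 0 := by
  set Ma := LinearMap.toMatrix b b A with hMa
  set x : Fin n → K := fun j => b.repr v j with hx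
  have row : ∀ i : Fin n, ∑ j, Ma i j * x j = θ * x i := by
    intro i
    have h1 := congrFun (LinearMap.toMatrix_mulVec_repr b b A v) i
    simp only [Matrix.mulVec, dotProduct] at h1
    rw [hv] at h1
    simpa [hx, hMa] using h1
  have main : ∀ m : ℕ, ∀ h : m < n, x ⟨m, h⟩ = 0 := by
    intro m
    induction m using Nat.strong_induction_on with
    | _ m ih =>
      intro h
      match m with
      | 0 => exact h0
      | k + 1 =>
        have hk : k < n := Nat.lt_of_succ_lt h
        have hrow := row ⟨k, hk⟩
        have hsum : ∑ j, Ma ⟨k, hk⟩ j * x j = Ma ⟨k, hk⟩ ⟨k+1, h⟩ * x ⟨k+1, h⟩ := by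
          apply Finset.sum_eq_single
          · intro j _ hj
            rcases lt_trichotomy (j : ℕ) (k+1) with hlt | heq | hgt
            · have := ih j (by omega) j.isLt
              rw [show (⟨(j : ℕ), j.isLt⟩ : Fin n) = j from rfl] at this
              rw [this, mul_zero]
            · exact absurd (Fin.ext heq) hj
            · rw [hA.1 ⟨k, hk⟩ j (Or.inl (by simpa using hgt)), zero_mul]
          · intro hmem; exact absurd (Finset.mem_univ _) hmem
        rw [hsum] at hrow
        have hxk : x ⟨k, hk⟩ = 0 := ih k (by omega) hk
        rw [hxk, mul_zero] at hrow
        have hne : Ma ⟨k, hk⟩ ⟨k+1, h⟩ ≠ 0 := hA.2 _ _ (Or.inl rfl)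
        exact (mul_eq_zero.mp hrow).resolve_left hne
  have : b.repr v = 0 := by
    ext j
    have := main j j.isLt
    simpa using this
  exact b.repr.map_eq_zero_iff.mp this

lemma diag_eigen {K V : Type*} [Field K] [AddCommGroup V] [Module K V]
    {n : ℕ} (c : Module.Basis (Fin n) K V) (A : Module.End K V)
    (hd : (LinearMap.toMatrix c c A).IsDiag) (i : Fin n) :
    A (c i) = (LinearMap.toMatrix c c A i i) • c i := by
  conv_lhs => rw [← c.sum_repr (A (c i))]
  rw [Finset.sum_eq_single i]
  · rw [LinearMap.toMatrix_apply]
  · intro j _ hj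
    have : LinearMap.toMatrix c c A j i = 0 := hd hj
    rw [LinearMap.toMatrix_apply] at this
    rw [this, zero_smul]
  · intro hmem; exact absurd (Finset.mem_univ _) hmem

theorem stmt_3 {K V : Type*} [Field K] [AddCommGroup V] [Module K V]
    [FiniteDimensional K V] (hV : 0 < Module.finrank K V)
    (A B : Module.End K V) (h : IsLeonardPair A B) :
    ∃ θ : Fin (Module.finrank K V) → K, Function.Injective θ ∧
      ∀ i, Module.End.HasEigenvalue A (θ i) := by
  obtain ⟨n, b, c, hAtri, hBdiag, hBtri, hAdiag⟩ := h
  have hn : Module.finrank K V = n := by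
    rw [Module.finrank_eq_card_basis c, Fintype.card_fin]
  have npos : 0 < n := hn ▸ hV
  have : Nontrivial V := Module.nontrivial_of_finrank_pos hV
  set θ : Fin n → K := fun i => LinearMap.toMatrix c c A i i with hθ
  have heig : ∀ i : Fin n, A (c i) = θ i • c i := fun i => diag_eigen c A hAdiag i
  -- injectivity of θ
  have hinj : Function.Injective θ := by
    intro i j hij
    by_contra hne
    -- first coordinates in basis b
    have key0 : ∀ k : Fin n, b.repr (c k) ⟨0, npos⟩ ≠ 0 := by
      intro k hk0
      exact c.ne_zero k (key_lemma npos b A hAtri (θ k) (c k) (heig k) hk0)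
    set a : K := b.repr (c i) ⟨0, npos⟩ with ha
    set e : K := b.repr (c j) ⟨0, npos⟩ with he
    set v : V := e • c i - a • c j with hvdef
    have hv : A v = θ i • v := by
      simp only [hvdef, map_sub, map_smul, heig i, heig j, ← hij, smul_sub]
      rw [smul_comm e (θ i), smul_comm a (θ i)]
    have h0 : b.repr v ⟨0, npos⟩ = 0 := by
      simp [hvdef, ← ha, ← he, mul_comm]
    have hv0 : v = 0 := key_lemma npos b A hAtri (θ i) v hv h0
    have : a = 0 := by
      have := congrArg (fun w => c.repr w j) hv0
      simpa [hvdef, Module.Basis.repr_self, Finsupp.single_apply, hne, Ne.symm hne] using this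
    exact key0 i (by rw [← ha, this])
  refine ⟨fun i => θ (Fin.cast hn i), ?_, ?_⟩
  · intro i j hij
    have h2 := hinj hij
    exact Fin.cast_injective hn h2
  · intro i
    apply Module.End.hasEigenvalue_of_hasEigenvector (x := c (Fin.cast hn i))
    constructor
    · rw [Module.End.mem_eigenspace_iff]
      exact heig _
    · exact c.ne_zero _
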